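/- Let α ∈ (0,n), 1<p_1,p_2<∞ with 1/p := 1/p_1 + 1/p_2 < 1, and set r = p_1/p, s = p_2/p (so r,s>1 and 1/r + 1/s = 1). Then there is a constant C, depending only on n, α, and the fixed parameters s_1, s_2, such that for all nonnegative measurable f,g on R^n and all x ∈ R^n: B_α(f,g)(x) ≤ C ( I_α(f^r)(x) )^{1/r} ( I_α(g^s)(x) )^{1/s}. -/

import Mathlib

open MeasureTheory Metric
open scoped ENNReal

noncomputable section

/-- The bilinear fractional integral `B_α` of nonnegative functions,
as an unsigned integral. -/
def BopL (n : ℕ) (α s₁ s₂ : ℝ) (f g : EuclideanSpace ℝ (Fin n) → ℝ)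
    (x : EuclideanSpace ℝ (Fin n)) : ℝ≥0∞ :=
  ∫⁻ y, ENNReal.ofReal (f (x - s₁ • y)) * ENNReal.ofReal (g (x - s₂ • y)) *
    ENNReal.ofReal (‖y‖ ^ (α - n))

/-- The linear fractional integral `I_α` of a nonnegative function,
as an unsigned integral. -/
def IopL (n : ℕ) (α : ℝ) (f : EuclideanSpace ℝ (Fin n) → ℝ)
    (x : EuclideanSpace ℝ (Fin n)) : ℝ≥0∞ :=
  ∫⁻ y, ENNReal.ofReal (f (x - y)) * ENNReal.ofReal (‖y‖ ^ (α - n))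

-- auxiliary scaling lemma
-- scaling lemma
lemma scale_int (n : ℕ) (α : ℝ) {c : ℝ} (hc : c ≠ 0)
    (h : EuclideanSpace ℝ (Fin n) → ℝ) (hh : Measurable h) (x : EuclideanSpace ℝ (Fin n)) :
    (∫⁻ y, ENNReal.ofReal (h (x - c • y)) * ENNReal.ofReal (‖y‖ ^ (α - n)))
      = ENNReal.ofReal (|c| ^ (-α)) *
        ∫⁻ y, ENNReal.ofReal (h (x - y)) * ENNReal.ofReal (‖y‖ ^ (α - n)) := by
  have hcpos : 0 < |c| := abs_pos.mpr hc
  set φ : EuclideanSpace ℝ (Fin n) → ℝ≥0∞ :=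
    fun z => ENNReal.ofReal (h (x - z)) * ENNReal.ofReal (‖z‖ ^ (α - n)) with hφdef
  have hφ : Measurable φ := by
    refine Measurable.mul (f := fun z => ENNReal.ofReal (h (x - z)))
      (g := fun z => ENNReal.ofReal (‖z‖ ^ (α - n))) ?_ ?_
    · exact (hh.comp (measurable_const.sub measurable_id)).ennreal_ofReal
    · exact (measurable_norm.pow measurable_const).ennreal_ofReal
  have key : ∀ y, ENNReal.ofReal (h (x - c • y)) * ENNReal.ofReal (‖y‖ ^ (α - n))
      = ENNReal.ofReal (|c| ^ ((n : ℝ) - α)) * φ (c • y) := by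
    intro y
    simp only [hφdef]
    rw [norm_smul, Real.norm_eq_abs, Real.mul_rpow (abs_nonneg c) (norm_nonneg y),
      ENNReal.ofReal_mul (Real.rpow_nonneg (abs_nonneg c) _)]
    rw [show ENNReal.ofReal (|c| ^ ((n : ℝ) - α)) *
        (ENNReal.ofReal (h (x - c • y)) *
          (ENNReal.ofReal (|c| ^ (α - n)) * ENNReal.ofReal (‖y‖ ^ (α - n))))
      = (ENNReal.ofReal (|c| ^ ((n : ℝ) - α)) * ENNReal.ofReal (|c| ^ (α - n))) *
          (ENNReal.ofReal (h (x - c • y)) * ENNReal.ofReal (‖y‖ ^ (α - n))) by ring]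
    rw [← ENNReal.ofReal_mul (Real.rpow_nonneg (abs_nonneg c) _),
      ← Real.rpow_add hcpos]
    norm_num
  calc (∫⁻ y, ENNReal.ofReal (h (x - c • y)) * ENNReal.ofReal (‖y‖ ^ (α - n)))
      = ∫⁻ y, ENNReal.ofReal (|c| ^ ((n : ℝ) - α)) * φ (c • y) := by
        simp_rw [key]
    _ = ENNReal.ofReal (|c| ^ ((n : ℝ) - α)) * ∫⁻ y, φ (c • y) :=
        lintegral_const_mul _ (hφ.comp (measurable_id.const_smul c))
    _ = ENNReal.ofReal (|c| ^ ((n : ℝ) - α)) *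
          (ENNReal.ofReal |(c ^ (Module.finrank ℝ (EuclideanSpace ℝ (Fin n))))|⁻¹ * ∫⁻ z, φ z) := by
        congr 1
        have h1 : (∫⁻ y, φ (c • y)) = ∫⁻ z, φ z ∂(Measure.map (c • ·) volume) :=
          (lintegral_map hφ (measurable_const_smul c)).symm
        rw [h1, MeasureTheory.Measure.map_addHaar_smul volume hc, lintegral_smul_measure,
          abs_inv, smul_eq_mul]
    _ = ENNReal.ofReal (|c| ^ (-α)) * ∫⁻ z, φ z := by
        rw [show Module.finrank ℝ (EuclideanSpace ℝ (Fin n)) = n from finrank_euclideanSpace_fin,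
          ← mul_assoc]
        congr 1
        rw [abs_pow, ← Real.rpow_natCast |c| n, ← Real.rpow_neg_one,
          ← Real.rpow_mul (abs_nonneg c), ← ENNReal.ofReal_mul (Real.rpow_nonneg (abs_nonneg c) _),
          ← Real.rpow_add hcpos]
        ring_nf

theorem statement8 (n : ℕ) (hn : 0 < n) (s₁ s₂ : ℝ)
    (hs₁ : s₁ ≠ 0) (hs₂ : s₂ ≠ 0) (hs : s₁ ≠ s₂)
    (α : ℝ) (hα₀ : 0 < α) (hαn : α < n)
    (p₁ p₂ p r s : ℝ) (hp₁ : 1 < p₁) (hp₂ : 1 < p₂)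
    (hp : 1 / p = 1 / p₁ + 1 / p₂) (hplt : 1 / p₁ + 1 / p₂ < 1)
    (hr : r = p₁ / p) (hsdef : s = p₂ / p) :
    ∃ C : ℝ, 0 < C ∧ ∀ f g : EuclideanSpace ℝ (Fin n) → ℝ,
      Measurable f → Measurable g → (∀ x, 0 ≤ f x) → (∀ x, 0 ≤ g x) →
      ∀ x : EuclideanSpace ℝ (Fin n),
        BopL n α s₁ s₂ f g x
          ≤ ENNReal.ofReal C * (IopL n α (fun y => f y ^ r) x) ^ (1 / r) *
              (IopL n α (fun y => g y ^ s) x) ^ (1 / s) := by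
  -- arithmetic groundwork
  have hp₁0 : 0 < p₁ := lt_trans one_pos hp₁
  have hp₂0 : 0 < p₂ := lt_trans one_pos hp₂
  have hpinv : 0 < 1 / p := by rw [hp]; positivity
  have hp0 : 0 < p := by
    rcases lt_trichotomy p 0 with h | h | h
    · exfalso; have : 1 / p < 0 := div_neg_of_pos_of_neg one_pos h; linarith
    · exfalso; rw [h] at hpinv; simp at hpinv
    · exact h
  have hr0 : 0 < r := hr ▸ div_pos hp₁0 hp0
  have hs0 : 0 < s := hsdef ▸ div_pos hp₂0 hp0
  have hsum : 1 / r + 1 / s = 1 := by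
    rw [hr, hsdef, one_div_div, one_div_div]
    calc p / p₁ + p / p₂ = p * (1 / p₁ + 1 / p₂) := by ring
      _ = p * (1 / p) := by rw [hp]
      _ = 1 := mul_one_div_cancel hp0.ne'
  have hr1 : 1 < r := by
    have hlt : p < p₁ := by
      have : 1 / p₁ < 1 / p := by rw [hp]; linarith [one_div_pos.mpr hp₂0]
      exact lt_of_one_div_lt_one_div hp₁0 this
    rw [hr]; exact (one_lt_div hp0).mpr hlt
  have hs1 : 1 < s := by
    have hlt : p < p₂ := by
      have : 1 / p₂ < 1 / p := by rw [hp]; linarith [one_div_pos.mpr hp₁0]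
      exact lt_of_one_div_lt_one_div hp₂0 this
    rw [hsdef]; exact (one_lt_div hp0).mpr hlt
  have hrs : Real.HolderConjugate r s :=
    Real.holderConjugate_iff.mpr ⟨hr1, by rw [← one_div, ← one_div]; exact hsum⟩
  have ha : (0:ℝ) < |s₁| ^ (-α) := Real.rpow_pos_of_pos (abs_pos.mpr hs₁) _
  have hb : (0:ℝ) < |s₂| ^ (-α) := Real.rpow_pos_of_pos (abs_pos.mpr hs₂) _
  refine ⟨(|s₁| ^ (-α)) ^ (1 / r) * (|s₂| ^ (-α)) ^ (1 / s), by positivity, ?_⟩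
  intro f g hf hg hf0 hg0 x
  set W : EuclideanSpace ℝ (Fin n) → ℝ≥0∞ :=
    fun y => ENNReal.ofReal (‖y‖ ^ (α - n)) with hWdef
  have hWmeas : Measurable W := (measurable_norm.pow measurable_const).ennreal_ofReal
  set u : EuclideanSpace ℝ (Fin n) → ℝ≥0∞ :=
    fun y => ENNReal.ofReal (f (x - s₁ • y)) * W y ^ (1 / r) with hudef
  set v : EuclideanSpace ℝ (Fin n) → ℝ≥0∞ :=
    fun y => ENNReal.ofReal (g (x - s₂ • y)) * W y ^ (1 / s) with hvdef
  have humeas : Measurable u :=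
    ((hf.comp (measurable_const.sub (measurable_const_smul s₁))).ennreal_ofReal).mul
      (hWmeas.pow measurable_const)
  have hvmeas : Measurable v :=
    ((hg.comp (measurable_const.sub (measurable_const_smul s₂))).ennreal_ofReal).mul
      (hWmeas.pow measurable_const)
  have step1 : BopL n α s₁ s₂ f g x = ∫⁻ y, u y * v y := by
    unfold BopL
    refine lintegral_congr fun y => ?_
    have hW1 : W y = W y ^ (1 / r) * W y ^ (1 / s) := by
      rw [← ENNReal.rpow_add_of_nonneg _ _ (by positivity) (by positivity), hsum,
        ENNReal.rpow_one]
    simp only [hudef, hvdef]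
    calc ENNReal.ofReal (f (x - s₁ • y)) * ENNReal.ofReal (g (x - s₂ • y)) * W y
        = ENNReal.ofReal (f (x - s₁ • y)) * ENNReal.ofReal (g (x - s₂ • y)) *
          (W y ^ (1 / r) * W y ^ (1 / s)) := by rw [← hW1]
      _ = (ENNReal.ofReal (f (x - s₁ • y)) * W y ^ (1 / r)) *
          (ENNReal.ofReal (g (x - s₂ • y)) * W y ^ (1 / s)) := by ring
  have step2 : (∫⁻ y, u y * v y) ≤
      (∫⁻ y, u y ^ r) ^ (1 / r) * (∫⁻ y, v y ^ s) ^ (1 / s) :=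
    ENNReal.lintegral_mul_le_Lp_mul_Lq volume hrs humeas.aemeasurable hvmeas.aemeasurable
  have hur : (∫⁻ y, u y ^ r) =
      ENNReal.ofReal (|s₁| ^ (-α)) * IopL n α (fun y => f y ^ r) x := by
    have h1 : ∀ y, u y ^ r =
        ENNReal.ofReal ((fun z => f z ^ r) (x - s₁ • y)) * ENNReal.ofReal (‖y‖ ^ (α - n)) := by
      intro y
      simp only [hudef, hWdef]
      rw [ENNReal.mul_rpow_of_nonneg _ _ hr0.le, ← ENNReal.rpow_mul,
        one_div_mul_cancel hr0.ne', ENNReal.rpow_one,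
        ENNReal.ofReal_rpow_of_nonneg (hf0 _) hr0.le]
    rw [lintegral_congr h1, scale_int n α hs₁ (fun z => f z ^ r) (hf.pow measurable_const) x]
    rfl
  have hvs : (∫⁻ y, v y ^ s) =
      ENNReal.ofReal (|s₂| ^ (-α)) * IopL n α (fun y => g y ^ s) x := by
    have h1 : ∀ y, v y ^ s =
        ENNReal.ofReal ((fun z => g z ^ s) (x - s₂ • y)) * ENNReal.ofReal (‖y‖ ^ (α - n)) := by
      intro y
      simp only [hvdef, hWdef]
      rw [ENNReal.mul_rpow_of_nonneg _ _ hs0.le, ← ENNReal.rpow_mul,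
        one_div_mul_cancel hs0.ne', ENNReal.rpow_one,
        ENNReal.ofReal_rpow_of_nonneg (hg0 _) hs0.le]
    rw [lintegral_congr h1, scale_int n α hs₂ (fun z => g z ^ s) (hg.pow measurable_const) x]
    rfl
  calc BopL n α s₁ s₂ f g x
      ≤ (∫⁻ y, u y ^ r) ^ (1 / r) * (∫⁻ y, v y ^ s) ^ (1 / s) := step1 ▸ step2
    _ = (ENNReal.ofReal (|s₁| ^ (-α)) * IopL n α (fun y => f y ^ r) x) ^ (1 / r) *
        (ENNReal.ofReal (|s₂| ^ (-α)) * IopL n α (fun y => g y ^ s) x) ^ (1 / s) := by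
        rw [hur, hvs]
    _ = ENNReal.ofReal ((|s₁| ^ (-α)) ^ (1 / r) * (|s₂| ^ (-α)) ^ (1 / s)) *
        (IopL n α (fun y => f y ^ r) x) ^ (1 / r) *
        (IopL n α (fun y => g y ^ s) x) ^ (1 / s) := by
        rw [ENNReal.mul_rpow_of_nonneg _ _ (by positivity),
          ENNReal.mul_rpow_of_nonneg _ _ (by positivity),
          ENNReal.ofReal_rpow_of_pos ha, ENNReal.ofReal_rpow_of_pos hb,
          ENNReal.ofReal_mul (by positivity)]
        ring
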